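/- Let 𝓛 be a regular language over a finite alphabet Σ and let f_𝓛(n) := #{w ∈ 𝓛 : length(w) ≤ n}. The following are equivalent: (1) f_𝓛(n) = O(n^d) for some natural number d; (2) f_𝓛(n) = o(C^n) for every real C > 1; (3) there do not exist words u, v, a, b over Σ with a and b nonempty, of the same length, and a ≠ b, such that u{a,b}*v ⊆ 𝓛; (4) 𝓛 is a finite union of languages of the form v_1 w_1* v_2 w_2* ⋯ v_k w_k* v_{k+1}, where k ≥ 0, the v_i are possibly empty words and the w_i are nonempty words over Σ. -/

import Mathlib

open Filter Asymptotics

/-- `f_𝓛(n)`: the number of words in `𝓛` of length at most `n`. -/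
noncomputable def langCount {α : Type*} (L : Language α) (n : ℕ) : ℕ :=
  Set.ncard {w : List α | w ∈ L ∧ w.length ≤ n}

/-- Condition (1): `f_𝓛(n) = O(n^d)` for some natural number `d`. -/
def PolyGrowth {α : Type*} (L : Language α) : Prop :=
  ∃ d : ℕ, (fun n : ℕ => (langCount L n : ℝ)) =O[atTop] fun n : ℕ => (n : ℝ) ^ d

/-- Condition (2): `f_𝓛(n) = o(C^n)` for every real `C > 1`. -/
def SubexpGrowth {α : Type*} (L : Language α) : Prop :=
  ∀ C : ℝ, 1 < C → (fun n : ℕ => (langCount L n : ℝ)) =o[atTop] fun n : ℕ => C ^ n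

/-- Condition (3): there are no words `u, v, a, b` with `a, b` nonempty, of the same
length, and `a ≠ b`, such that `u{a,b}*v ⊆ 𝓛`. -/
def NoDoublePump {α : Type*} (L : Language α) : Prop :=
  ¬ ∃ u v a b : List α, a ≠ [] ∧ b ≠ [] ∧ a.length = b.length ∧ a ≠ b ∧
    ∀ s : List (List α), (∀ x ∈ s, x = a ∨ x = b) → (u ++ s.flatten ++ v) ∈ L

/-- Condition (4): `𝓛` is a finite union of languages of the form
`v₁ w₁* v₂ w₂* ⋯ v_k w_k* v_{k+1}` with the `w_i` nonempty. -/
def IsFiniteUnionOfSimpleSparse {α : Type*} (L : Language α) : Prop :=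
  ∃ (n : ℕ) (k : Fin n → ℕ) (v : (i : Fin n) → Fin (k i + 1) → List α)
    (w : (i : Fin n) → Fin (k i) → List α),
    (∀ i j, w i j ≠ []) ∧
    ∀ x : List α, x ∈ L ↔ ∃ (i : Fin n) (e : Fin (k i) → ℕ),
      x = v i 0 ++ (List.ofFn fun j : Fin (k i) =>
        (List.replicate (e j) (w i j)).flatten ++ v i j.succ).flatten

/-- `n`-fold repetition of a word. -/
def lpow {β : Type*} (z : List β) (n : ℕ) : List β := (List.replicate n z).flatten

@[simp] lemma lpow_zero {β : Type*} (z : List β) : lpow z 0 = [] := rfl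

@[simp] lemma lpow_succ {β : Type*} (z : List β) (n : ℕ) :
    lpow z (n + 1) = z ++ lpow z n := by
  simp [lpow, List.replicate_succ]

lemma lpow_add {β : Type*} (z : List β) (m n : ℕ) :
    lpow z (m + n) = lpow z m ++ lpow z n := by
  induction m with
  | zero => simp
  | succ m ih => rw [Nat.succ_add, lpow_succ, lpow_succ, ih, List.append_assoc]

@[simp] lemma length_lpow {β : Type*} (z : List β) (n : ℕ) :
    (lpow z n).length = n * z.length := by
  induction n with
  | zero => simp
  | succ n ih => simp [lpow_succ, ih, Nat.succ_mul]; ring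

lemma lpow_comm {β : Type*} (z : List β) (m n : ℕ) :
    lpow z m ++ lpow z n = lpow z n ++ lpow z m := by
  rw [← lpow_add, ← lpow_add, Nat.add_comm]

lemma lpow_mul {β : Type*} (z : List β) (a b : ℕ) :
    lpow z (a * b) = lpow (lpow z a) b := by
  induction b with
  | zero => simp
  | succ b ih =>
    rw [Nat.mul_succ, Nat.add_comm, lpow_add, ih, lpow_succ]

lemma lpow_eq_nil {β : Type*} {z : List β} {n : ℕ} (hz : z ≠ []) (h : lpow z n = []) : n = 0 := by
  cases n with
  | zero => rfl
  | succ n => simp [lpow_succ] at h; exact absurd h.1 hz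

/-- Commuting words are powers of a common word. -/
theorem comm_root {β : Type*} :
    ∀ (n : ℕ) (x y : List β), x.length + y.length ≤ n → x ++ y = y ++ x →
      ∃ z i j, x = lpow z i ∧ y = lpow z j := by
  intro n
  induction n with
  | zero =>
    intro x y hlen _
    have hx : x = [] := List.length_eq_zero_iff.mp (by omega)
    have hy : y = [] := List.length_eq_zero_iff.mp (by omega)
    exact ⟨[], 0, 0, by simp [hx], by simp [hy]⟩
  | succ n ih =>
    intro x y hlen h
    rcases eq_or_ne x [] with rfl | hx
    · exact ⟨y, 0, 1, by simp, by simp⟩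
    rcases eq_or_ne y [] with rfl | hy
    · exact ⟨x, 1, 0, by simp, by simp⟩
    rcases le_total x.length y.length with hle | hle
    · -- x is a prefix of y
      have hxy : x = y.take x.length := by
        have := congrArg (List.take x.length) h
        rw [List.take_append_of_le_length le_rfl,
          List.take_append_of_le_length hle, List.take_length] at this
        exact this
      set t := y.drop x.length with ht
      have hyt : y = x ++ t := by rw [hxy, ht]; simp
      have hcomm : x ++ t = t ++ x := by
        have : x ++ (x ++ t) = (x ++ t) ++ x := by rw [← hyt, h]
        rwa [List.append_assoc, List.append_cancel_left_eq] at this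
      have hlen' : x.length + t.length ≤ n := by
        have h1 : 1 ≤ x.length := by
          cases x with
          | nil => exact absurd rfl hx
          | cons a l => simp
        have h2 : x.length + t.length = y.length := by
          rw [hyt]; simp
        omega
      obtain ⟨z, i, j, hxz, htz⟩ := ih x t hlen' hcomm
      exact ⟨z, i, i + j, hxz, by rw [hyt, hxz, htz, ← lpow_add]⟩
    · -- y is a prefix of x
      have hxy : y = x.take y.length := by
        have := congrArg (List.take y.length) h.symm
        rw [List.take_append_of_le_length le_rfl,
          List.take_append_of_le_length hle, List.take_length] at this
        exact this
      set t := x.drop y.length with ht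
      have hyt : x = y ++ t := by rw [hxy, ht]; simp
      have hcomm : y ++ t = t ++ y := by
        have : y ++ (y ++ t) = (y ++ t) ++ y := by rw [← hyt, h.symm]
        rwa [List.append_assoc, List.append_cancel_left_eq] at this
      have hlen' : y.length + t.length ≤ n := by
        have h1 : 1 ≤ y.length := by
          cases y with
          | nil => exact absurd rfl hy
          | cons a l => simp
        have h2 : y.length + t.length = x.length := by
          rw [hyt]; simp
        omega
      obtain ⟨z, i, j, hyz, htz⟩ := ih y t hlen' hcomm
      exact ⟨z, i + j, i, by rw [hyt, hyz, htz, ← lpow_add], hyz⟩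

lemma periodic_mul {γ : Type*} {f : ℕ → γ} {a : ℕ} (ha : ∀ m, f (m + a) = f m) :
    ∀ (k m : ℕ), f (m + a * k) = f m := by
  intro k
  induction k with
  | zero => simp
  | succ k ih =>
    intro m
    rw [Nat.mul_succ, ← Nat.add_assoc, ha, ih]

theorem periodic_gcd {γ : Type*} :
    ∀ (a b : ℕ) (f : ℕ → γ), (∀ m, f (m + a) = f m) → (∀ m, f (m + b) = f m) →
      ∀ m, f (m + Nat.gcd a b) = f m := by
  intro a
  induction a using Nat.strong_induction_on with
  | _ a IH =>
    intro b f ha hb m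
    rcases Nat.eq_zero_or_pos a with rfl | hpos
    · simpa using hb m
    · have hmod : ∀ m, f (m + b % a) = f m := by
        intro m
        have h1 : m + b % a + a * (b / a) = m + b := by
          rw [Nat.add_assoc, Nat.mod_add_div]
        calc f (m + b % a) = f (m + b % a + a * (b / a)) := (periodic_mul ha _ _).symm
          _ = f (m + b) := by rw [h1]
          _ = f m := hb m
      have := IH (b % a) (Nat.mod_lt _ hpos) a f hmod ha m
      rwa [Nat.gcd_rec]

section DFAstuff

variable {α : Type*} {σ : Type*} (M : DFA α σ)

/-- `c` is a (nonempty) cycle at state `q`. -/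
def Cyc (q : σ) (c : List α) : Prop := c ≠ [] ∧ M.evalFrom q c = q

/-- `q` is reachable and co-reachable. -/
def Trim (q : σ) : Prop := (∃ u, M.eval u = q) ∧ ∃ v, M.evalFrom q v ∈ M.accept

lemma evalFrom_lpow {q : σ} {c : List α} (h : M.evalFrom q c = q) (n : ℕ) :
    M.evalFrom q (lpow c n) = q := by
  induction n with
  | zero => rfl
  | succ n ih => rw [lpow_succ, DFA.evalFrom_of_append, h, ih]

lemma evalFrom_flatten_mem {q : σ} {a b : List α} (ha : M.evalFrom q a = q)
    (hb : M.evalFrom q b = q) :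
    ∀ s : List (List α), (∀ x ∈ s, x = a ∨ x = b) → M.evalFrom q s.flatten = q := by
  intro s
  induction s with
  | nil => intro _; rfl
  | cons c t ih =>
    intro hs
    rw [List.flatten_cons, DFA.evalFrom_of_append]
    have hc : M.evalFrom q c = q := by
      rcases hs c (by simp) with rfl | rfl
      · exact ha
      · exact hb
    rw [hc, ih fun x hx => hs x (by simp [hx])]

/-- From NoDoublePump: cycles at a trim state are determined by their length. -/
lemma cyc_unique (hND : NoDoublePump M.accepts) {q : σ} (hq : Trim M q) {c d : List α}
    (hc : Cyc M q c) (hd : Cyc M q d) (hlen : c.length = d.length) : c = d := by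
  by_contra hne
  obtain ⟨⟨u, hu⟩, ⟨v, hv⟩⟩ := hq
  exact hND ⟨u, v, c, d, hc.1, hd.1, hlen, hne, fun s hs => by
    have : M.evalFrom q s.flatten = q := evalFrom_flatten_mem M hc.2 hd.2 s hs
    show M.eval (u ++ s.flatten ++ v) ∈ M.accept
    rw [DFA.eval, DFA.evalFrom_of_append, DFA.evalFrom_of_append]
    rw [show M.evalFrom M.start u = q from hu, this]
    exact hv⟩

lemma cyc_append {q : σ} {c d : List α} (hc : Cyc M q c) (hd : Cyc M q d) :
    Cyc M q (c ++ d) := by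
  refine ⟨by simp [hc.1], ?_⟩
  rw [DFA.evalFrom_of_append, hc.2, hd.2]

lemma cyc_comm (hND : NoDoublePump M.accepts) {q : σ} (hq : Trim M q) {c d : List α}
    (hc : Cyc M q c) (hd : Cyc M q d) : c ++ d = d ++ c :=
  cyc_unique M hND hq (cyc_append M hc hd) (cyc_append M hd hc) (by simp [Nat.add_comm])

/-- Every state with a cycle has a cycle of length at most the number of states. -/
lemma cyc_short [Fintype σ] {q : σ} :
    ∀ (n : ℕ) (c : List α), c.length ≤ n → Cyc M q c →
      ∃ c', Cyc M q c' ∧ c'.length ≤ Fintype.card σ := by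
  intro n
  induction n with
  | zero => intro c hlen hc; exact absurd (List.length_eq_zero_iff.mp (by omega)) hc.1
  | succ n ih =>
    intro c hlen hc
    rcases le_or_gt c.length (Fintype.card σ) with h | h
    · exact ⟨c, hc, h⟩
    · obtain ⟨p, a, b, c', hsplit, hablen, hbne, ha, hbcyc, hc'⟩ :=
        M.evalFrom_split (s := q) (t := q) (x := c) (by omega) hc.2
      rcases eq_or_ne (a ++ c') [] with hnil | hne
      · have ha' : a = [] := by
          rcases List.append_eq_nil_iff.mp hnil with ⟨h1, _⟩; exact h1
        have : p = q := by rw [← ha, ha']; rfl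
        exact ⟨b, ⟨hbne, by rw [← this]; exact hbcyc⟩, by omega⟩
      · have hcyc2 : Cyc M q (a ++ c') := by
          refine ⟨hne, ?_⟩
          rw [DFA.evalFrom_of_append, ha, hc']
        have hlen2 : (a ++ c').length ≤ n := by
          have : c.length = a.length + b.length + c'.length := by
            rw [hsplit]; simp; omega
          have hb1 : 1 ≤ b.length := by
            cases b with
            | nil => exact absurd rfl hbne
            | cons x l => simp
          simp only [List.length_append]
          omega
        exact ih _ hlen2 hcyc2

/-- There is a minimal-length cycle. -/
lemma min_cyc {q : σ} (h : ∃ c, Cyc M q c) :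
    ∃ c, Cyc M q c ∧ ∀ d, Cyc M q d → c.length ≤ d.length := by
  classical
  have hex : ∃ n, ∃ c, Cyc M q c ∧ c.length = n := by
    obtain ⟨c, hc⟩ := h
    exact ⟨c.length, c, hc, rfl⟩
  obtain ⟨c, hc, hlen⟩ := Nat.find_spec hex
  refine ⟨c, hc, fun d hd => ?_⟩
  rw [hlen]
  exact Nat.find_min' hex ⟨d, hd, rfl⟩

open Classical in
/-- The primitive root cycle at a state. -/
noncomputable def root (q : σ) : List α :=
  if h : ∃ c, Cyc M q c then Classical.choose (min_cyc M h) else []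

lemma root_spec {q : σ} (h : ∃ c, Cyc M q c) :
    Cyc M q (root M q) ∧ ∀ d, Cyc M q d → (root M q).length ≤ d.length := by
  rw [root, dif_pos h]
  exact Classical.choose_spec (min_cyc M h)

lemma root_short [Fintype σ] {q : σ} (h : ∃ c, Cyc M q c) :
    (root M q).length ≤ Fintype.card σ := by
  obtain ⟨c, hc⟩ := id h
  obtain ⟨c', hc', hlen⟩ := cyc_short M c.length c le_rfl hc
  exact le_trans ((root_spec M h).2 c' hc') hlen

/-- Every cycle at a trim state is a power of the root. -/
lemma cyc_pow_root (hND : NoDoublePump M.accepts) {q : σ} (hq : Trim M q) {c : List α}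
    (hc : Cyc M q c) : ∃ e, c = lpow (root M q) e := by
  have hex : ∃ c, Cyc M q c := ⟨c, hc⟩
  obtain ⟨ht, hmin⟩ := root_spec M hex
  set t := root M q with htdef
  have hcomm : c ++ t = t ++ c := cyc_comm M hND hq hc ht
  obtain ⟨z, i, j, hcz, htz⟩ := comm_root (c.length + t.length) c t le_rfl hcomm
  have hz : z ≠ [] := by
    rintro rfl
    exact ht.1 (by simpa [lpow] using htz)
  have hj : j ≠ 0 := fun h => ht.1 (by simp [htz, h])
  have hi : i ≠ 0 := fun h => hc.1 (by simp [hcz, h])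
  set f : ℕ → σ := fun m => M.evalFrom q (lpow z m) with hf
  have hper : ∀ (k : ℕ), M.evalFrom q (lpow z k) = q → ∀ m, f (m + k) = f m := by
    intro k hk m
    simp only [hf, Nat.add_comm m k, lpow_add, DFA.evalFrom_of_append, hk]
  have hpi : ∀ m, f (m + i) = f m := hper i (by rw [← hcz]; exact hc.2)
  have hpj : ∀ m, f (m + j) = f m := hper j (by rw [← htz]; exact ht.2)
  have hg : f (Nat.gcd i j) = q := by
    have := periodic_gcd i j f hpi hpj 0
    simpa [hf] using this
  set g := Nat.gcd i j with hgdef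
  have hgpos : g ≠ 0 := Nat.gcd_ne_zero_left hi
  have hgcyc : Cyc M q (lpow z g) := by
    refine ⟨?_, hg⟩
    intro hnil
    exact hgpos (lpow_eq_nil hz hnil)
  have hjg : j ≤ g := by
    have := hmin _ hgcyc
    rw [htz] at this
    simp only [length_lpow] at this
    have hzlen : 1 ≤ z.length := by
      cases z with
      | nil => exact absurd rfl hz
      | cons x l => simp
    exact Nat.le_of_mul_le_mul_right this (by omega)
  have hgj : g = j := le_antisymm (Nat.le_of_dvd (Nat.pos_of_ne_zero hj) (Nat.gcd_dvd_right i j)) hjg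
  have hji : j ∣ i := hgj ▸ Nat.gcd_dvd_left i j
  obtain ⟨e, he⟩ := hji
  exact ⟨e, by rw [hcz, htz, he, lpow_mul]⟩

end DFAstuff

section Parse

variable {α : Type*} {σ : Type*}

/-- The language `v₁ w₁* v₂ w₂* ⋯ f` described by a list of pieces and a final word. -/
def SchemeLang : List (List α × List α) → List α → Set (List α)
  | [], f => {f}
  | p :: r, f => {x | ∃ e y, y ∈ SchemeLang r f ∧ x = p.1 ++ lpow p.2 e ++ y}

/-- Prepend a letter to the scheme. -/
def consA (a : α) : List (List α × List α) × List α → List (List α × List α) × List α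
  | ([], f) => ([], a :: f)
  | ((v, w) :: r, f) => ((a :: v, w) :: r, f)

lemma mem_consA {a : α} {vw : List (List α × List α)} {f y : List α}
    (h : y ∈ SchemeLang vw f) :
    a :: y ∈ SchemeLang (consA a (vw, f)).1 (consA a (vw, f)).2 := by
  cases vw with
  | nil => simp only [SchemeLang, Set.mem_singleton_iff] at h; simp [consA, SchemeLang, h]
  | cons p r =>
    obtain ⟨v, w⟩ := p
    obtain ⟨e, y0, hy0, rfl⟩ := h
    exact ⟨e, y0, hy0, rfl⟩

lemma consA_sub {a : α} {vw : List (List α × List α)} {f : List α} :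
    ∀ x ∈ SchemeLang (consA a (vw, f)).1 (consA a (vw, f)).2,
      ∃ y ∈ SchemeLang vw f, x = a :: y := by
  intro x hx
  cases vw with
  | nil =>
    simp only [consA, SchemeLang, Set.mem_singleton_iff] at hx
    exact ⟨f, rfl, hx⟩
  | cons p r =>
    obtain ⟨v, w⟩ := p
    obtain ⟨e, y0, hy0, rfl⟩ := hx
    exact ⟨v ++ lpow w e ++ y0, ⟨e, y0, hy0, rfl⟩, rfl⟩

lemma consA_mem_snd {a : α} {vw : List (List α × List α)} {f : List α} :
    ∀ p ∈ (consA a (vw, f)).1, ∃ p' ∈ vw, p.2 = p'.2 := by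
  intro p hp
  cases vw with
  | nil => simp [consA] at hp
  | cons p0 r =>
    obtain ⟨v, w⟩ := p0
    simp only [consA, List.mem_cons] at hp
    rcases hp with rfl | hp
    · exact ⟨(v, w), by simp, rfl⟩
    · exact ⟨p, by simp [hp], rfl⟩

/-- Size of a scheme. -/
def ssize (vw : List (List α × List α)) (f : List α) : ℕ :=
  vw.length + (vw.map fun p => p.1.length).sum + f.length

lemma consA_size (a : α) (vw : List (List α × List α)) (f : List α) :
    ssize (consA a (vw, f)).1 (consA a (vw, f)).2 = ssize vw f + 1 := by
  cases vw with
  | nil => simp [consA, ssize]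
  | cons p r => obtain ⟨v, w⟩ := p; simp [consA, ssize]; omega

/-- The set of states visited while reading `x` from `q`. -/
noncomputable def Vis (M : DFA α σ) (q : σ) (x : List α) : Finset σ :=
  letI := Classical.decEq σ
  (Finset.range (x.length + 1)).image fun i => M.evalFrom q (x.take i)

lemma mem_Vis {M : DFA α σ} {q p : σ} {x : List α} :
    p ∈ Vis M q x ↔ ∃ i ≤ x.length, M.evalFrom q (x.take i) = p := by
  simp [Vis, Nat.lt_succ_iff]

lemma self_mem_Vis {M : DFA α σ} {q : σ} {x : List α} : q ∈ Vis M q x :=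
  mem_Vis.mpr ⟨0, Nat.zero_le _, rfl⟩

lemma evalFrom_cons (M : DFA α σ) (q : σ) (a : α) (l : List α) :
    M.evalFrom q (a :: l) = M.evalFrom (M.step q a) l := rfl

/-- Main parsing lemma. -/
lemma parse (M : DFA α σ) [Fintype σ] (hND : NoDoublePump M.accepts) :
    ∀ (n : ℕ) (q : σ) (x : List α), (Vis M q x).card ≤ n → (∃ u, M.eval u = q) →
      M.evalFrom q x ∈ M.accept →
      ∃ vw f, x ∈ SchemeLang vw f ∧
        (∀ p ∈ vw, p.2 ≠ [] ∧ p.2.length ≤ Fintype.card σ) ∧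
        ssize vw f ≤ 2 * n ∧
        ∀ y ∈ SchemeLang vw f, M.evalFrom q y ∈ M.accept := by
  intro n
  induction n with
  | zero =>
    intro q x hcard _ _
    have h1 : 0 < (Vis M q x).card := Finset.card_pos.mpr ⟨q, self_mem_Vis⟩
    omega
  | succ n IH =>
    intro q x hcard hreach hacc
    classical
    set P : ℕ → Prop := fun i => i ≤ x.length ∧ M.evalFrom q (x.take i) = q with hPdef
    have hP0 : P 0 := ⟨Nat.zero_le _, rfl⟩
    set j := Nat.findGreatest P x.length with hjdef
    have hPj : P j := Nat.findGreatest_spec (Nat.zero_le _) hP0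
    have hjmax : ∀ m, j < m → m ≤ x.length → ¬ P m :=
      fun m h1 h2 => Nat.findGreatest_is_greatest h1 h2
    set c := x.take j with hcdef
    set r := x.drop j with hrdef
    have hx : x = c ++ r := (List.take_append_drop j x).symm
    have hclen : c.length = j := by
      rw [hcdef, List.length_take]
      exact min_eq_left hPj.1
    have hc : M.evalFrom q c = q := hPj.2
    cases hr : r with
    | nil =>
      -- x = c, ends at q, q accepting
      have hxc : x = c := by rw [hx, hr, List.append_nil]
      have hqacc : q ∈ M.accept := by rw [hxc, hc] at hacc; exact hacc
      rcases eq_or_ne c [] with hcnil | hcne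
      · refine ⟨[], [], ?_, by simp, by simp [ssize], ?_⟩
        · simp [SchemeLang, hxc, hcnil]
        · intro y hy
          simp only [SchemeLang, Set.mem_singleton_iff] at hy
          simp [hy, hqacc]
      · have hcyc : Cyc M q c := ⟨hcne, hc⟩
        have hex : ∃ cc, Cyc M q cc := ⟨c, hcyc⟩
        have htrim : Trim M q := ⟨hreach, [], by simpa using hqacc⟩
        obtain ⟨e, he⟩ := cyc_pow_root M hND htrim hcyc
        refine ⟨[([], root M q)], [], ⟨e, [], rfl, by simp [hxc, he]⟩, ?_, by simp [ssize]; omega, ?_⟩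
        · intro p hp
          simp only [List.mem_singleton] at hp
          subst hp
          exact ⟨(root_spec M hex).1.1, root_short M hex⟩
        · rintro y ⟨e', y0, hy0, rfl⟩
          simp only [SchemeLang, Set.mem_singleton_iff] at hy0
          subst hy0
          simp only [List.nil_append, List.append_nil]
          rw [evalFrom_lpow M (root_spec M hex).1.2]
          exact hqacc
    | cons a y' =>
      set q' := M.step q a with hq'def
      have hxay : x = c ++ a :: y' := by rw [hx, hr]
      have hxlen : x.length = j + 1 + y'.length := by
        rw [hxay]; simp; omega
      have hkey : ∀ i, M.evalFrom q' (y'.take i) = M.evalFrom q (x.take (j + 1 + i)) := by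
        intro i
        have htake : x.take (j + 1 + i) = c ++ a :: y'.take i := by
          rw [hxay, List.take_append]
          have h2 : j + 1 + i - c.length = i + 1 := by omega
          rw [h2, List.take_succ_cons, List.take_of_length_le (by omega : c.length ≤ j + 1 + i)]
        rw [htake, DFA.evalFrom_of_append, hc, evalFrom_cons]
      have hsub : Vis M q' y' ⊆ (Vis M q x).erase q := by
        intro p hp
        obtain ⟨i, hi, hpi⟩ := mem_Vis.mp hp
        rw [Finset.mem_erase]
        constructor
        · rintro rfl
          exact hjmax (j + 1 + i) (by omega) (by omega) ⟨by omega, by rw [← hkey i, hpi]⟩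
        · exact mem_Vis.mpr ⟨j + 1 + i, by omega, by rw [← hkey i, hpi]⟩
      have hcard' : (Vis M q' y').card ≤ n := by
        have h1 := Finset.card_le_card hsub
        have h2 : ((Vis M q x).erase q).card = (Vis M q x).card - 1 :=
          Finset.card_erase_of_mem self_mem_Vis
        omega
      have hreach' : ∃ u', M.eval u' = q' := by
        obtain ⟨u, hu⟩ := hreach
        exact ⟨u ++ (c ++ [a]), by
          rw [DFA.eval, DFA.evalFrom_of_append, ← DFA.eval]
          rw [hu, DFA.evalFrom_of_append, hc]
          rfl⟩
      have hacc' : M.evalFrom q' y' ∈ M.accept := by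
        rw [hxay] at hacc
        rw [DFA.evalFrom_of_append, hc, evalFrom_cons] at hacc
        exact hacc
      obtain ⟨vw', f', hmem', hw', hsize', hval'⟩ := IH q' y' hcard' hreach' hacc'
      by_cases hcyc : ∃ cc, Cyc M q cc
      · -- emit a pumping piece at q
        have htrim : Trim M q := ⟨hreach, x, hacc⟩
        have hcpow : ∃ e, c = lpow (root M q) e := by
          rcases eq_or_ne c [] with hcnil | hcne
          · exact ⟨0, by simp [hcnil]⟩
          · exact cyc_pow_root M hND htrim ⟨hcne, hc⟩
        obtain ⟨e, he⟩ := hcpow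
        refine ⟨([], root M q) :: (consA a (vw', f')).1, (consA a (vw', f')).2,
          ⟨e, a :: y', mem_consA hmem', by rw [hxay, he]; simp⟩, ?_, ?_, ?_⟩
        · intro p hp
          rcases List.mem_cons.mp hp with rfl | hp
          · exact ⟨(root_spec M hcyc).1.1, root_short M hcyc⟩
          · obtain ⟨p', hp', hpe⟩ := consA_mem_snd p hp
            rw [hpe]
            exact hw' p' hp'
        · have h1 := consA_size a vw' f'
          simp only [ssize] at h1 hsize' ⊢
          simp only [List.length_cons, List.map_cons, List.sum_cons, List.length_nil]
          omega
        · rintro y ⟨e', y0, hy0, rfl⟩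
          obtain ⟨y1, hy1, rfl⟩ := consA_sub y0 hy0
          simp only [List.nil_append]
          rw [DFA.evalFrom_of_append, evalFrom_lpow M (root_spec M hcyc).1.2, evalFrom_cons]
          exact hval' y1 hy1
      · -- no cycle at q, so c = []
        have hcnil : c = [] := by
          by_contra hcne
          exact hcyc ⟨c, hcne, hc⟩
        have hxa : x = a :: y' := by rw [hxay, hcnil]; rfl
        refine ⟨(consA a (vw', f')).1, (consA a (vw', f')).2, by rw [hxa]; exact mem_consA hmem',
          ?_, ?_, ?_⟩
        · intro p hp
          obtain ⟨p', hp', hpe⟩ := consA_mem_snd p hp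
          rw [hpe]
          exact hw' p' hp'
        · have h1 := consA_size a vw' f'
          omega
        · intro y hy
          obtain ⟨y1, hy1, rfl⟩ := consA_sub y hy
          rw [evalFrom_cons]
          exact hval' y1 hy1

end Parse

section Bridge

variable {α : Type*} {σ : Type*}

/-- The `v`-words of a scheme, as a function on `Fin (len+1)`. -/
def Vv (vw : List (List α × List α)) (f : List α) (j : Fin (vw.length + 1)) : List α :=
  if h : (j : ℕ) < vw.length then (vw.get ⟨j, h⟩).1 else f

lemma Vv_succ (p : List α × List α) (r : List (List α × List α)) (f : List α)
    (j : Fin (r.length + 1)) : Vv (p :: r) f j.succ = Vv r f j := by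
  rcases j with ⟨jv, hj⟩
  by_cases h : jv < r.length
  · simp [Vv, h, Nat.succ_lt_succ h]
  · simp [Vv, h, fun hh => h (Nat.lt_of_succ_lt_succ hh)]

lemma expr_cons (v w f : List α) (r : List (List α × List α)) (e : Fin (r.length + 1) → ℕ) :
    Vv ((v, w) :: r) f 0 ++ (List.ofFn fun j : Fin (r.length + 1) =>
        lpow ((((v, w) :: r).get j).2) (e j) ++ Vv ((v, w) :: r) f j.succ).flatten
    = v ++ lpow w (e 0) ++ (Vv r f 0 ++ (List.ofFn fun j : Fin r.length =>
        lpow ((r.get j).2) (e j.succ) ++ Vv r f j.succ).flatten) := by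
  rw [List.ofFn_succ]
  have h0 : Vv ((v, w) :: r) f 0 = v := by simp [Vv]
  have h1 : Vv ((v, w) :: r) f (Fin.succ (0 : Fin (r.length + 1))) = Vv r f 0 := Vv_succ _ _ _ 0
  have h3 : (((v, w) :: r).get (0 : Fin (r.length + 1))) = (v, w) := rfl
  have h2 : (List.ofFn fun i : Fin r.length =>
      lpow ((((v, w) :: r).get (Fin.succ i : Fin (r.length + 1))).2) (e i.succ)
        ++ Vv ((v, w) :: r) f (Fin.succ i : Fin (r.length + 1)).succ)
      = List.ofFn fun i : Fin r.length => lpow ((r.get i).2) (e i.succ) ++ Vv r f i.succ := by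
    congr 1
    funext i
    rw [Vv_succ]
    rfl
  rw [h0, h1, h3, h2, List.flatten_cons, List.append_assoc]
  rw [← List.append_assoc]

theorem bridge : ∀ (vw : List (List α × List α)) (f x : List α),
    x ∈ SchemeLang vw f ↔ ∃ e : Fin vw.length → ℕ,
      x = Vv vw f 0 ++ (List.ofFn fun j : Fin vw.length =>
        lpow ((vw.get j).2) (e j) ++ Vv vw f j.succ).flatten := by
  intro vw
  induction vw with
  | nil =>
    intro f x
    simp only [SchemeLang, Set.mem_singleton_iff]
    constructor
    · rintro rfl
      exact ⟨Fin.elim0, by simp [Vv]⟩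
    · rintro ⟨e, rfl⟩
      simp [Vv]
  | cons p r IH =>
    obtain ⟨v, w⟩ := p
    intro f x
    constructor
    · rintro ⟨e₀, y, hy, rfl⟩
      obtain ⟨e', he'⟩ := (IH f y).mp hy
      refine ⟨Fin.cons (α := fun _ => ℕ) e₀ e', ?_⟩
      show (v, w).1 ++ lpow (v, w).2 e₀ ++ y
        = Vv ((v, w) :: r) f 0 ++ (List.ofFn fun j : Fin (r.length + 1) =>
          lpow ((((v, w) :: r).get j).2) (Fin.cons (α := fun _ => ℕ) e₀ e' j)
            ++ Vv ((v, w) :: r) f j.succ).flatten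
      rw [expr_cons]
      simp only [Fin.cons_zero, Fin.cons_succ]
      rw [← he']
    · rintro ⟨e, rfl⟩
      refine ⟨e ⟨0, Nat.succ_pos _⟩, Vv r f 0 ++ (List.ofFn fun j : Fin r.length =>
        lpow ((r.get j).2) (e j.succ) ++ Vv r f j.succ).flatten,
        (IH f _).mpr ⟨fun j => e j.succ, rfl⟩, ?_⟩
      show Vv ((v, w) :: r) f 0 ++ (List.ofFn fun j : Fin (r.length + 1) =>
          lpow ((((v, w) :: r).get j).2) (e j) ++ Vv ((v, w) :: r) f j.succ).flatten
        = (v, w).1 ++ lpow (v, w).2 (e ⟨0, Nat.succ_pos _⟩) ++ _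
      rw [expr_cons]
      rfl

end Bridge

section Finiteness

lemma map_val_pmap_subtype {γ : Type*} {s : Set γ} :
    ∀ (l : List γ) (hmem : ∀ x ∈ l, x ∈ s),
      List.map Subtype.val (l.pmap (fun x h => (⟨x, h⟩ : s)) hmem) = l := by
  intro l
  induction l with
  | nil => intro _; rfl
  | cons a t ih =>
    intro hmem
    simp only [List.pmap, List.map_cons, ih]

lemma finite_bounded_lists {γ : Type*} {s : Set γ} (hs : s.Finite) (B : ℕ) :
    {l : List γ | l.length ≤ B ∧ ∀ x ∈ l, x ∈ s}.Finite := by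
  haveI := hs.to_subtype
  apply Set.Finite.subset
    (Set.Finite.image (fun l : List s => l.map Subtype.val) (List.finite_length_le s B))
  rintro l ⟨hlen, hmem⟩
  refine ⟨l.pmap (fun x h => ⟨x, h⟩) hmem, ?_, ?_⟩
  · simp only [Set.mem_setOf_eq, List.length_pmap]
    exact hlen
  · exact map_val_pmap_subtype l hmem

variable {α : Type*} {σ : Type*}

/-- The set of good schemes for a DFA `M`. -/
def GoodSchemes (M : DFA α σ) [Fintype σ] : Set (List (List α × List α) × List α) :=
  {s | (∀ p ∈ s.1, p.2 ≠ [] ∧ p.1.length ≤ 2 * Fintype.card σ ∧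
          p.2.length ≤ 2 * Fintype.card σ) ∧
    s.1.length ≤ 2 * Fintype.card σ ∧ s.2.length ≤ 2 * Fintype.card σ ∧
    SchemeLang s.1 s.2 ⊆ M.accepts}

lemma goodSchemes_finite [Fintype α] (M : DFA α σ) [Fintype σ] : (GoodSchemes M).Finite := by
  set B := 2 * Fintype.card σ
  have hW : ({l : List α | l.length ≤ B}).Finite := List.finite_length_le α B
  have hP : ({p : List α × List α | p.1.length ≤ B ∧ p.2.length ≤ B}).Finite := by
    apply Set.Finite.subset (hW.prod hW)
    rintro ⟨p1, p2⟩ ⟨h1, h2⟩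
    exact ⟨h1, h2⟩
  have hL : ({l : List (List α × List α) | l.length ≤ B ∧
      ∀ p ∈ l, p.1.length ≤ B ∧ p.2.length ≤ B}).Finite := finite_bounded_lists hP B
  apply Set.Finite.subset (hL.prod hW)
  rintro ⟨vw, f⟩ ⟨h1, h2, h3, _⟩
  exact ⟨⟨h2, fun p hp => ⟨(h1 p hp).2.1, (h1 p hp).2.2⟩⟩, h3⟩

/-- Parsing, packaged: every accepted word lies in the language of a good scheme. -/
lemma parse_accepts (M : DFA α σ) [Fintype σ] (hND : NoDoublePump M.accepts) {x : List α}
    (hx : x ∈ M.accepts) :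
    ∃ vw f, x ∈ SchemeLang vw f ∧ (vw, f) ∈ GoodSchemes M := by
  have hcard : (Vis M M.start x).card ≤ Fintype.card σ := Finset.card_le_univ _
  obtain ⟨vw, f, hmem, hw, hsize, hval⟩ :=
    parse M hND (Fintype.card σ) M.start x hcard ⟨[], rfl⟩ hx
  refine ⟨vw, f, hmem, ⟨?_, ?_, ?_, ?_⟩⟩
  · intro p hp
    refine ⟨(hw p hp).1, ?_, le_trans (hw p hp).2 (by omega)⟩
    have h1 : p.1.length ∈ vw.map fun p => p.1.length := List.mem_map_of_mem hp
    have h2 : p.1.length ≤ (vw.map fun p => p.1.length).sum :=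
      List.single_le_sum (fun _ _ => Nat.zero_le _) _ h1
    simp only [ssize] at hsize
    first | omega | (dsimp only; omega)
  · simp only [ssize] at hsize; first | omega | (dsimp only; omega)
  · simp only [ssize] at hsize; first | omega | (dsimp only; omega)
  · intro y hy
    exact hval y hy

/-- NoDoublePump implies the finite-union decomposition. -/
theorem ndp_implies_union [Fintype α] (M : DFA α σ) [Fintype σ]
    (hND : NoDoublePump M.accepts) : IsFiniteUnionOfSimpleSparse M.accepts := by
  classical
  have hGS : (GoodSchemes M).Finite := goodSchemes_finite M
  haveI : Fintype ↥(GoodSchemes M) := hGS.fintype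
  set E := (Fintype.equivFin ↥(GoodSchemes M)).symm with hE
  refine ⟨Fintype.card ↥(GoodSchemes M),
    fun i => ((E i).1.1).length,
    fun i => Vv ((E i).1.1) ((E i).1.2),
    fun i j => (((E i).1.1).get j).2, ?_, ?_⟩
  · intro i j
    exact ((E i).2.1 _ (List.get_mem _ j)).1
  · intro x
    constructor
    · intro hx
      obtain ⟨vw, f, hmem, hgood⟩ := parse_accepts M hND hx
      obtain ⟨e, he⟩ := (bridge vw f x).mp hmem
      refine ⟨(Fintype.equivFin ↥(GoodSchemes M)) ⟨(vw, f), hgood⟩, ?_⟩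
      have hEi : E ((Fintype.equivFin ↥(GoodSchemes M)) ⟨(vw, f), hgood⟩) = ⟨(vw, f), hgood⟩ := by
        rw [hE]; exact Equiv.symm_apply_apply _ _
      have hmemX : x ∈ SchemeLang (E ((Fintype.equivFin ↥(GoodSchemes M)) ⟨(vw, f), hgood⟩)).1.1 (E ((Fintype.equivFin ↥(GoodSchemes M)) ⟨(vw, f), hgood⟩)).1.2 := by
        rw [hEi]
        exact hmem
      exact (bridge _ _ x).mp hmemX
    · rintro ⟨i, e, rfl⟩
      apply (E i).2.2.2.2
      exact (bridge _ _ _).mpr ⟨e, rfl⟩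

end Finiteness

section Counting

variable {α : Type*}

lemma langCount_set_finite [Fintype α] (L : Language α) (n : ℕ) :
    {w : List α | w ∈ L ∧ w.length ≤ n}.Finite :=
  (List.finite_length_le α n).subset fun _ hw => hw.2

/-- (4) implies (1). -/
theorem union_implies_poly [Fintype α] (L : Language α)
    (h : IsFiniteUnionOfSimpleSparse L) : PolyGrowth L := by
  classical
  obtain ⟨n, k, v, w, hw, hiff⟩ := h
  set K := Finset.univ.sup k with hK
  have hKk : ∀ i, k i ≤ K := fun i => Finset.le_sup (Finset.mem_univ i)
  have bound : ∀ m, langCount L m ≤ n * (m + 1) ^ K := by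
    intro m
    set T := Fin n × (Fin K → Fin (m + 1)) with hT
    set g : T → List α := fun p => v p.1 0 ++ (List.ofFn fun j : Fin (k p.1) =>
      (List.replicate ((p.2 (Fin.castLE (hKk p.1) j)) : ℕ) (w p.1 j)).flatten
        ++ v p.1 j.succ).flatten with hg
    have hsub : {x : List α | x ∈ L ∧ x.length ≤ m} ⊆ Set.range g := by
      rintro x ⟨hxL, hxlen⟩
      obtain ⟨i, e, he⟩ := (hiff x).mp hxL
      have hej : ∀ j : Fin (k i), e j ≤ m := by
        intro j
        have hmem : (List.replicate (e j) (w i j)).flatten ++ v i j.succ ∈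
            (List.ofFn fun j : Fin (k i) =>
              (List.replicate (e j) (w i j)).flatten ++ v i j.succ) :=
          List.mem_ofFn.mpr ⟨j, rfl⟩
        have h1 : ((List.replicate (e j) (w i j)).flatten ++ v i j.succ).length ≤
            (List.ofFn fun j : Fin (k i) =>
              (List.replicate (e j) (w i j)).flatten ++ v i j.succ).flatten.length := by
          rw [List.length_flatten]
          exact List.single_le_sum (fun _ _ => Nat.zero_le _) _ (List.mem_map_of_mem hmem)
        have hx2 : x.length = (v i 0).length + (List.ofFn fun j : Fin (k i) =>
            (List.replicate (e j) (w i j)).flatten ++ v i j.succ).flatten.length := by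
          rw [he, List.length_append]
        have h3 : ((List.replicate (e j) (w i j)).flatten).length = e j * (w i j).length := by
          rw [List.length_flatten, List.map_replicate, List.sum_replicate, smul_eq_mul]
        have h4 := List.length_append (as := (List.replicate (e j) (w i j)).flatten) (bs := v i j.succ)
        have h5 : 1 ≤ (w i j).length := by
          have := hw i j
          cases hwj : w i j with
          | nil => exact absurd hwj this
          | cons _ _ => simp [hwj]
        have h6 : e j * 1 ≤ e j * (w i j).length := Nat.mul_le_mul_left _ h5
        omega
      set E : Fin K → Fin (m + 1) := fun j' =>
        if hj : (j' : ℕ) < k i then ⟨e ⟨j', hj⟩, Nat.lt_succ_of_le (hej ⟨j', hj⟩)⟩ else 0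
        with hEdef
      have hEval : ∀ j : Fin (k i), ((E (Fin.castLE (hKk i) j)) : ℕ) = e j := by
        intro j
        simp only [hEdef]
        rw [dif_pos (show ((Fin.castLE (hKk i) j : Fin K) : ℕ) < k i from j.isLt)]
        rfl
      refine ⟨⟨i, E⟩, ?_⟩
      simp only [hg]
      rw [he]
      have hofn : (List.ofFn fun j : Fin (k i) =>
          (List.replicate ((E (Fin.castLE (hKk i) j) : ℕ)) (w i j)).flatten ++ v i j.succ)
          = List.ofFn fun j : Fin (k i) =>
            (List.replicate (e j) (w i j)).flatten ++ v i j.succ := by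
        congr 1
        funext j
        rw [hEval j]
      rw [hofn]
    have h1 : (Set.range g).Finite := Set.finite_range g
    calc langCount L m ≤ (Set.range g).ncard :=
        Set.ncard_le_ncard hsub h1
      _ = (g '' Set.univ).ncard := by rw [Set.image_univ]
      _ ≤ (Set.univ : Set T).ncard := Set.ncard_image_le Set.finite_univ
      _ = Nat.card T := Set.ncard_univ T
      _ = Fintype.card T := Nat.card_eq_fintype_card
      _ = n * (m + 1) ^ K := by simp [hT]
  refine ⟨K, isBigO_iff.mpr ⟨(n : ℝ) * 2 ^ K, ?_⟩⟩
  filter_upwards [Filter.eventually_ge_atTop 1] with m hm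
  have h1 : ((langCount L m : ℝ)) ≤ (n : ℝ) * ((m : ℝ) + 1) ^ K := by
    have := bound m
    calc ((langCount L m : ℝ)) ≤ ((n * (m + 1) ^ K : ℕ) : ℝ) := by exact_mod_cast this
      _ = (n : ℝ) * ((m : ℝ) + 1) ^ K := by push_cast; ring
  have h2 : ((m : ℝ) + 1) ^ K ≤ (2 * (m : ℝ)) ^ K := by
    apply pow_le_pow_left₀ (by positivity)
    have : (1 : ℝ) ≤ (m : ℝ) := by exact_mod_cast hm
    linarith
  rw [Real.norm_natCast, norm_pow, Real.norm_natCast]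
  calc ((langCount L m : ℝ)) ≤ (n : ℝ) * ((m : ℝ) + 1) ^ K := h1
    _ ≤ (n : ℝ) * (2 * (m : ℝ)) ^ K := by
        apply mul_le_mul_of_nonneg_left h2 (by positivity)
    _ = (n : ℝ) * 2 ^ K * (m : ℝ) ^ K := by rw [mul_pow]; ring

/-- (1) implies (2). -/
theorem poly_implies_subexp (L : Language α) (h : PolyGrowth L) : SubexpGrowth L := by
  intro C hC
  obtain ⟨d, hd⟩ := h
  exact hd.trans_isLittleO (isLittleO_pow_const_const_pow_of_one_lt d hC)

lemma flatten_blocks_inj {γ : Type*} (ℓ : ℕ) :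
    ∀ (m : ℕ) (f g : Fin m → List γ), (∀ i, (f i).length = ℓ) → (∀ i, (g i).length = ℓ) →
      (List.ofFn f).flatten = (List.ofFn g).flatten → ∀ i, f i = g i := by
  intro m
  induction m with
  | zero => intro f g _ _ _ i; exact absurd i.isLt (by omega)
  | succ m ih =>
    intro f g hf hg heq i
    rw [List.ofFn_succ, List.ofFn_succ, List.flatten_cons, List.flatten_cons] at heq
    obtain ⟨h0, hrest⟩ := List.append_inj heq (by rw [hf 0, hg 0])
    rcases Fin.eq_zero_or_eq_succ i with rfl | ⟨j, rfl⟩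
    · exact h0
    · exact ih (fun i => f i.succ) (fun i => g i.succ) (fun i => hf i.succ)
        (fun i => hg i.succ) hrest j

/-- (2) implies (3). -/
theorem subexp_implies_ndp [Fintype α] (L : Language α) (hsub : SubexpGrowth L) :
    NoDoublePump L := by
  rintro ⟨u, v, a, b, ha, hb, hlen, hne, hpump⟩
  set ℓ := a.length with hℓ
  have hℓ1 : 1 ≤ ℓ := by
    cases hae : a with
    | nil => exact absurd hae ha
    | cons _ _ => rw [hℓ, hae]; simp
  set c0 := u.length + v.length with hc0
  -- the injection
  have lower : ∀ m, 2 ^ m ≤ langCount L (c0 + m * ℓ) := by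
    intro m
    set F : (Fin m → Bool) → List α := fun s =>
      u ++ (List.ofFn fun i => if s i then a else b).flatten ++ v with hF
    have hblock : ∀ (s : Fin m → Bool) (i : Fin m), (if s i then a else b).length = ℓ := by
      intro s i
      by_cases h : s i <;> simp [h, hℓ, hlen.symm]
    have hfl : ∀ s : Fin m → Bool,
        (List.ofFn fun i => if s i then a else b).flatten.length = m * ℓ := by
      intro s
      rw [List.length_flatten, List.map_ofFn, List.sum_ofFn]
      simp only [Function.comp]
      rw [Finset.sum_congr rfl fun i _ => hblock s i]
      simp [Finset.sum_const, Finset.card_univ]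
    have hmemF : ∀ s, F s ∈ {w : List α | w ∈ L ∧ w.length ≤ c0 + m * ℓ} := by
      intro s
      constructor
      · apply hpump
        intro x hx
        rw [List.mem_ofFn] at hx
        obtain ⟨i, rfl⟩ := hx
        by_cases h : s i
        · left; simp [h]
        · right; simp [h]
      · simp only [hF, List.length_append, hfl s]
        omega
    have hinj : Function.Injective F := by
      intro s s' hss
      simp only [hF] at hss
      rw [List.append_assoc, List.append_assoc] at hss
      have h1 := (List.append_inj hss rfl).2
      have h2 := (List.append_inj h1.symm (by rw [hfl, hfl])).1
      funext i
      have h3 := flatten_blocks_inj ℓ m _ _ (hblock s') (hblock s) h2 i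
      by_contra hne'
      rcases Bool.eq_false_or_eq_true (s i) with h4 | h4 <;>
        rcases Bool.eq_false_or_eq_true (s' i) with h5 | h5 <;>
          simp [h4, h5] at hne' h3 ⊢
      · exact hne h3.symm
      · exact hne h3
    have h1 : (Set.range F) ⊆ {w : List α | w ∈ L ∧ w.length ≤ c0 + m * ℓ} := by
      rintro x ⟨s, rfl⟩
      exact hmemF s
    calc 2 ^ m = Fintype.card (Fin m → Bool) := by simp
      _ = Nat.card (Fin m → Bool) := Nat.card_eq_fintype_card.symm
      _ = (Set.univ : Set (Fin m → Bool)).ncard := (Set.ncard_univ _).symm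
      _ = (F '' Set.univ).ncard := (Set.ncard_image_of_injective _ hinj).symm
      _ = (Set.range F).ncard := by rw [Set.image_univ]
      _ ≤ langCount L (c0 + m * ℓ) :=
          Set.ncard_le_ncard h1 (langCount_set_finite L _)
  -- choose C and derive a contradiction
  set C : ℝ := (2 : ℝ) ^ ((1 : ℝ) / (2 * ℓ)) with hCdef
  have hC : 1 < C := by
    rw [hCdef]
    rw [Real.one_lt_rpow_iff_of_pos (by norm_num)]
    left
    constructor
    · norm_num
    · positivity
  have hlo := hsub C hC
  rw [Asymptotics.isLittleO_iff] at hlo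
  have hev := hlo (c := 1) (by norm_num)
  rw [Filter.eventually_atTop] at hev
  obtain ⟨N0, hN0⟩ := hev
  set m := N0 + c0 + 1 with hm
  set nn := c0 + m * ℓ with hnn
  have hnN0 : N0 ≤ nn := by
    have : m ≤ m * ℓ := Nat.le_mul_of_pos_right m (by omega)
    omega
  have hbound := hN0 nn hnN0
  rw [Real.norm_natCast, one_mul] at hbound
  have hCn : ‖C ^ nn‖ = (2 : ℝ) ^ (((1 : ℝ) / (2 * ℓ)) * (nn : ℝ)) := by
    have hCpos : (0 : ℝ) ≤ C := le_of_lt (lt_trans one_pos hC)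
    rw [norm_pow, Real.norm_eq_abs, abs_of_nonneg hCpos, hCdef,
      ← Real.rpow_natCast ((2 : ℝ) ^ ((1 : ℝ) / (2 * (ℓ : ℝ)))) nn,
      ← Real.rpow_mul (by norm_num)]
  have hlow : ((2 : ℝ)) ^ (m : ℝ) ≤ ‖C ^ nn‖ := by
    have h2m : ((2 ^ m : ℕ) : ℝ) ≤ (langCount L nn : ℝ) := by exact_mod_cast lower m
    have : ((2 : ℝ)) ^ (m : ℝ) = ((2 ^ m : ℕ) : ℝ) := by
      rw [Real.rpow_natCast]; push_cast; ring
    rw [this]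
    exact le_trans h2m hbound
  rw [hCn] at hlow
  rw [Real.rpow_le_rpow_left_iff (by norm_num : (1:ℝ) < 2)] at hlow
  have hℓR : (0 : ℝ) < 2 * (ℓ : ℝ) := by positivity
  have hmul : (m : ℝ) * (2 * (ℓ : ℝ)) ≤ (nn : ℝ) := by
    have h7 := mul_le_mul_of_nonneg_right hlow (le_of_lt hℓR)
    calc (m : ℝ) * (2 * ℓ) ≤ ((1 / (2 * ℓ)) * (nn : ℝ)) * (2 * ℓ) := h7
      _ = (nn : ℝ) := by field_simp
  have hnat : m * (2 * ℓ) ≤ nn := by exact_mod_cast hmul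
  have hA : m ≤ m * ℓ := Nat.le_mul_of_pos_right m (by omega)
  have hB : m * (2 * ℓ) = 2 * (m * ℓ) := by ring
  omega

end Counting

/-- For a regular language `𝓛` over a finite alphabet, the four
sparseness conditions (1)–(4) are equivalent. -/
theorem sparse_regular_tfae {α : Type*} [Fintype α] (L : Language α)
    (hL : L.IsRegular) :
    (PolyGrowth L ↔ SubexpGrowth L) ∧ (PolyGrowth L ↔ NoDoublePump L) ∧
    (PolyGrowth L ↔ IsFiniteUnionOfSimpleSparse L) := by
  obtain ⟨σ, fσ, M, hM⟩ := hL
  haveI := fσ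
  subst hM
  have h12 : PolyGrowth M.accepts → SubexpGrowth M.accepts := poly_implies_subexp _
  have h23 : SubexpGrowth M.accepts → NoDoublePump M.accepts := subexp_implies_ndp _
  have h34 : NoDoublePump M.accepts → IsFiniteUnionOfSimpleSparse M.accepts :=
    ndp_implies_union M
  have h41 : IsFiniteUnionOfSimpleSparse M.accepts → PolyGrowth M.accepts :=
    union_implies_poly _
  exact ⟨⟨h12, fun h => h41 (h34 (h23 h))⟩,
    ⟨fun h => h23 (h12 h), fun h => h41 (h34 h)⟩,
    ⟨fun h => h34 (h23 (h12 h)), h41⟩⟩
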